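/- Let p be an odd prime and let G be a subgroup of B₀(p). Then G is conjugate in GL₂(𝔽_p) to a subgroup of C_s(p) if and only if p does not divide the order of G. -/

import Mathlib

open Matrix

abbrev GL2 (p : ℕ) := GL (Fin 2) (ZMod p)

/-- The subgroup `SL₂` of `GL₂(ℤ/nℤ)`, i.e. the kernel of the determinant. -/
def SL2sub (n : ℕ) : Subgroup (GL (Fin 2) (ZMod n)) :=
  (Matrix.GeneralLinearGroup.det : GL (Fin 2) (ZMod n) →* (ZMod n)ˣ).ker

/-- The split Cartan subgroup: diagonal matrices in `GL₂(𝔽_p)`. -/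
def Cs (p : ℕ) : Subgroup (GL2 p) where
  carrier := { g | (g : Matrix (Fin 2) (Fin 2) (ZMod p)) 0 1 = 0 ∧
      (g : Matrix (Fin 2) (Fin 2) (ZMod p)) 1 0 = 0 }
  one_mem' := by simp
  mul_mem' := by
    rintro a b ⟨ha1, ha2⟩ ⟨hb1, hb2⟩
    refine ⟨?_, ?_⟩ <;>
      simp [Units.val_mul, Matrix.mul_apply, Fin.sum_univ_two, ha1, ha2, hb1, hb2]
  inv_mem' := by
    rintro a ⟨h1, h2⟩
    have h : ((a⁻¹ : GL2 p) : Matrix (Fin 2) (Fin 2) (ZMod p))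
        = Ring.inverse ((a : Matrix (Fin 2) (Fin 2) (ZMod p)).det) •
          Matrix.adjugate (a : Matrix (Fin 2) (Fin 2) (ZMod p)) := by
      rw [Matrix.coe_units_inv, Matrix.inv_def]
    refine ⟨?_, ?_⟩ <;> simp [h, Matrix.adjugate_fin_two, h1, h2]

/-- The Borel subgroup: upper triangular matrices in `GL₂(𝔽_p)`. -/
def B0 (p : ℕ) : Subgroup (GL2 p) where
  carrier := { g | (g : Matrix (Fin 2) (Fin 2) (ZMod p)) 1 0 = 0 }
  one_mem' := by simp
  mul_mem' := by
    intro a b ha hb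
    simp only [Set.mem_setOf_eq] at *
    simp [Units.val_mul, Matrix.mul_apply, Fin.sum_univ_two, ha, hb]
  inv_mem' := by
    intro a h
    simp only [Set.mem_setOf_eq] at *
    have hh : ((a⁻¹ : GL2 p) : Matrix (Fin 2) (Fin 2) (ZMod p))
        = Ring.inverse ((a : Matrix (Fin 2) (Fin 2) (ZMod p)).det) •
          Matrix.adjugate (a : Matrix (Fin 2) (Fin 2) (ZMod p)) := by
      rw [Matrix.coe_units_inv, Matrix.inv_def]
    simp [hh, Matrix.adjugate_fin_two, h]

/-- The subgroup of scalar matrices in `GL₂(𝔽_p)`. -/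
def Zs (p : ℕ) : Subgroup (GL2 p) where
  carrier := { g | (g : Matrix (Fin 2) (Fin 2) (ZMod p)) 0 1 = 0 ∧
      (g : Matrix (Fin 2) (Fin 2) (ZMod p)) 1 0 = 0 ∧
      (g : Matrix (Fin 2) (Fin 2) (ZMod p)) 1 1 = (g : Matrix (Fin 2) (Fin 2) (ZMod p)) 0 0 }
  one_mem' := by simp
  mul_mem' := by
    rintro a b ⟨ha1, ha2, ha3⟩ ⟨hb1, hb2, hb3⟩
    refine ⟨?_, ?_, ?_⟩ <;>
      simp [Units.val_mul, Matrix.mul_apply, Fin.sum_univ_two, ha1, ha2, ha3, hb1, hb2, hb3]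
  inv_mem' := by
    rintro a ⟨h1, h2, h3⟩
    have hh : ((a⁻¹ : GL2 p) : Matrix (Fin 2) (Fin 2) (ZMod p))
        = Ring.inverse ((a : Matrix (Fin 2) (Fin 2) (ZMod p)).det) •
          Matrix.adjugate (a : Matrix (Fin 2) (Fin 2) (ZMod p)) := by
      rw [Matrix.coe_units_inv, Matrix.inv_def]
    refine ⟨?_, ?_, ?_⟩ <;> simp [hh, Matrix.adjugate_fin_two, h1, h2, h3]

/-- The normalizer of the split Cartan subgroup: diagonal and antidiagonal matrices. -/
def Ns (p : ℕ) : Subgroup (GL2 p) where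
  carrier := { g | ((g : Matrix (Fin 2) (Fin 2) (ZMod p)) 0 1 = 0 ∧
      (g : Matrix (Fin 2) (Fin 2) (ZMod p)) 1 0 = 0) ∨
      ((g : Matrix (Fin 2) (Fin 2) (ZMod p)) 0 0 = 0 ∧
      (g : Matrix (Fin 2) (Fin 2) (ZMod p)) 1 1 = 0) }
  one_mem' := by simp
  mul_mem' := by
    rintro a b (⟨ha1, ha2⟩ | ⟨ha1, ha2⟩) (⟨hb1, hb2⟩ | ⟨hb1, hb2⟩)
    · refine Or.inl ⟨?_, ?_⟩ <;>
        simp [Units.val_mul, Matrix.mul_apply, Fin.sum_univ_two, ha1, ha2, hb1, hb2]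
    · refine Or.inr ⟨?_, ?_⟩ <;>
        simp [Units.val_mul, Matrix.mul_apply, Fin.sum_univ_two, ha1, ha2, hb1, hb2]
    · refine Or.inr ⟨?_, ?_⟩ <;>
        simp [Units.val_mul, Matrix.mul_apply, Fin.sum_univ_two, ha1, ha2, hb1, hb2]
    · refine Or.inl ⟨?_, ?_⟩ <;>
        simp [Units.val_mul, Matrix.mul_apply, Fin.sum_univ_two, ha1, ha2, hb1, hb2]
  inv_mem' := by
    intro a h
    have hh : ((a⁻¹ : GL2 p) : Matrix (Fin 2) (Fin 2) (ZMod p))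
        = Ring.inverse ((a : Matrix (Fin 2) (Fin 2) (ZMod p)).det) •
          Matrix.adjugate (a : Matrix (Fin 2) (Fin 2) (ZMod p)) := by
      rw [Matrix.coe_units_inv, Matrix.inv_def]
    rcases h with ⟨h1, h2⟩ | ⟨h1, h2⟩
    · refine Or.inl ⟨?_, ?_⟩ <;> simp [hh, Matrix.adjugate_fin_two, h1, h2]
    · refine Or.inr ⟨?_, ?_⟩ <;> simp [hh, Matrix.adjugate_fin_two, h1, h2]

/-- The nonsplit Cartan subgroup attached to a nonsquare `ε`:
invertible matrices of the form `[[a, bε], [b, a]]`. -/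
def Cns (p : ℕ) (ε : ZMod p) : Subgroup (GL2 p) where
  carrier := { g | (g : Matrix (Fin 2) (Fin 2) (ZMod p)) 1 1 =
      (g : Matrix (Fin 2) (Fin 2) (ZMod p)) 0 0 ∧
      (g : Matrix (Fin 2) (Fin 2) (ZMod p)) 0 1 = ε * (g : Matrix (Fin 2) (Fin 2) (ZMod p)) 1 0 }
  one_mem' := by simp
  mul_mem' := by
    rintro a b ⟨ha1, ha2⟩ ⟨hb1, hb2⟩
    refine ⟨?_, ?_⟩ <;>
      simp [Units.val_mul, Matrix.mul_apply, Fin.sum_univ_two, ha1, ha2, hb1, hb2] <;>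
      try ring
  inv_mem' := by
    rintro a ⟨h1, h2⟩
    have hh : ((a⁻¹ : GL2 p) : Matrix (Fin 2) (Fin 2) (ZMod p))
        = Ring.inverse ((a : Matrix (Fin 2) (Fin 2) (ZMod p)).det) •
          Matrix.adjugate (a : Matrix (Fin 2) (Fin 2) (ZMod p)) := by
      rw [Matrix.coe_units_inv, Matrix.inv_def]
    refine ⟨?_, ?_⟩ <;> simp [hh, Matrix.adjugate_fin_two, h1, h2] <;> try ring

/-- The normalizer of the nonsplit Cartan subgroup:
matrices `[[a, bε], [b, a]]` together with matrices `[[a, bε], [-b, -a]]`. -/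
def Nns (p : ℕ) (ε : ZMod p) : Subgroup (GL2 p) where
  carrier := { g | ((g : Matrix (Fin 2) (Fin 2) (ZMod p)) 1 1 =
      (g : Matrix (Fin 2) (Fin 2) (ZMod p)) 0 0 ∧
      (g : Matrix (Fin 2) (Fin 2) (ZMod p)) 0 1 = ε * (g : Matrix (Fin 2) (Fin 2) (ZMod p)) 1 0) ∨
      ((g : Matrix (Fin 2) (Fin 2) (ZMod p)) 1 1 =
      -(g : Matrix (Fin 2) (Fin 2) (ZMod p)) 0 0 ∧
      (g : Matrix (Fin 2) (Fin 2) (ZMod p)) 0 1 =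
        -(ε * (g : Matrix (Fin 2) (Fin 2) (ZMod p)) 1 0)) }
  one_mem' := by simp
  mul_mem' := by
    rintro a b (⟨ha1, ha2⟩ | ⟨ha1, ha2⟩) (⟨hb1, hb2⟩ | ⟨hb1, hb2⟩)
    · refine Or.inl ⟨?_, ?_⟩ <;>
        simp [Units.val_mul, Matrix.mul_apply, Fin.sum_univ_two, ha1, ha2, hb1, hb2] <;>
        try ring
    · refine Or.inr ⟨?_, ?_⟩ <;>
        simp [Units.val_mul, Matrix.mul_apply, Fin.sum_univ_two, ha1, ha2, hb1, hb2] <;>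
        try ring
    · refine Or.inr ⟨?_, ?_⟩ <;>
        simp [Units.val_mul, Matrix.mul_apply, Fin.sum_univ_two, ha1, ha2, hb1, hb2] <;>
        try ring
    · refine Or.inl ⟨?_, ?_⟩ <;>
        simp [Units.val_mul, Matrix.mul_apply, Fin.sum_univ_two, ha1, ha2, hb1, hb2] <;>
        try ring
  inv_mem' := by
    intro a h
    have hh : ((a⁻¹ : GL2 p) : Matrix (Fin 2) (Fin 2) (ZMod p))
        = Ring.inverse ((a : Matrix (Fin 2) (Fin 2) (ZMod p)).det) •
          Matrix.adjugate (a : Matrix (Fin 2) (Fin 2) (ZMod p)) := by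
      rw [Matrix.coe_units_inv, Matrix.inv_def]
    rcases h with ⟨h1, h2⟩ | ⟨h1, h2⟩
    · refine Or.inl ⟨?_, ?_⟩ <;> simp [hh, Matrix.adjugate_fin_two, h1, h2] <;> try ring
    · refine Or.inr ⟨?_, ?_⟩ <;> simp [hh, Matrix.adjugate_fin_two, h1, h2] <;> try ring
/-- The matrix `γ = [[1,1],[0,1]]` as an element of `GL₂(𝔽_p)`. -/
def gam (p : ℕ) : GL2 p where
  val := !![1, 1; 0, 1]
  inv := !![1, -1; 0, 1]
  val_inv := by
    ext i j
    fin_cases i <;> fin_cases j <;>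
      simp [Matrix.mul_apply, Fin.sum_univ_two, Matrix.one_apply]
  inv_val := by
    ext i j
    fin_cases i <;> fin_cases j <;>
      simp [Matrix.mul_apply, Fin.sum_univ_two, Matrix.one_apply]

/-- The diagonal matrix `diag(a, 1)` as an element of `GL₂(𝔽_p)`. -/
def dMat (p : ℕ) (a : (ZMod p)ˣ) : GL2 p where
  val := !![(a : ZMod p), 0; 0, 1]
  inv := !![((a⁻¹ : (ZMod p)ˣ) : ZMod p), 0; 0, 1]
  val_inv := by
    ext i j
    fin_cases i <;> fin_cases j <;>
      simp [Matrix.mul_apply, Fin.sum_univ_two, Matrix.one_apply, ← Units.val_mul]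
  inv_val := by
    ext i j
    fin_cases i <;> fin_cases j <;>
      simp [Matrix.mul_apply, Fin.sum_univ_two, Matrix.one_apply, ← Units.val_mul]

/-- `a ↦ diag(a, 1)` as a group homomorphism `𝔽_p^× → GL₂(𝔽_p)`. -/
def dHom (p : ℕ) : (ZMod p)ˣ →* GL2 p where
  toFun := dMat p
  map_one' := by
    refine Units.ext ?_
    simp only [dMat]
    ext i j
    fin_cases i <;> fin_cases j <;> simp [Matrix.one_apply]
  map_mul' := by
    intro a b
    refine Units.ext ?_
    simp only [dMat, Units.val_mul]
    ext i j
    fin_cases i <;> fin_cases j <;> simp [Matrix.mul_apply, Fin.sum_univ_two]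

/-- The semi-Cartan power subgroup `D^k = { diag(a^k, 1) : a ∈ 𝔽_p^× }`. -/
def Dpow (p k : ℕ) : Subgroup (GL2 p) :=
  ((dHom p).comp (powMonoidHom k)).range

/-- The diagonal matrix `diag(1, a)` as an element of `GL₂(𝔽_p)`. -/
def dMatF (p : ℕ) (a : (ZMod p)ˣ) : GL2 p where
  val := !![1, 0; 0, (a : ZMod p)]
  inv := !![1, 0; 0, ((a⁻¹ : (ZMod p)ˣ) : ZMod p)]
  val_inv := by
    ext i j
    fin_cases i <;> fin_cases j <;>
      simp [Matrix.mul_apply, Fin.sum_univ_two, Matrix.one_apply, ← Units.val_mul]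
  inv_val := by
    ext i j
    fin_cases i <;> fin_cases j <;>
      simp [Matrix.mul_apply, Fin.sum_univ_two, Matrix.one_apply, ← Units.val_mul]

/-- `a ↦ diag(1, a)` as a group homomorphism `𝔽_p^× → GL₂(𝔽_p)`. -/
def dHomF (p : ℕ) : (ZMod p)ˣ →* GL2 p where
  toFun := dMatF p
  map_one' := by
    refine Units.ext ?_
    simp only [dMatF]
    ext i j
    fin_cases i <;> fin_cases j <;> simp [Matrix.one_apply]
  map_mul' := by
    intro a b
    refine Units.ext ?_
    simp only [dMatF, Units.val_mul]
    ext i j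
    fin_cases i <;> fin_cases j <;> simp [Matrix.mul_apply, Fin.sum_univ_two]

/-- The flip `(D^k)_f = { diag(1, a^k) : a ∈ 𝔽_p^× }` of the semi-Cartan power subgroup. -/
def DpowF (p k : ℕ) : Subgroup (GL2 p) :=
  ((dHomF p).comp (powMonoidHom k)).range

/-- Any two elements of the nonsplit Cartan subgroup commute. -/
lemma cns_comm {p : ℕ} {ε : ZMod p} {a b : GL2 p} (ha : a ∈ Cns p ε) (hb : b ∈ Cns p ε) :
    a * b = b * a := by
  obtain ⟨ha1, ha2⟩ := ha
  obtain ⟨hb1, hb2⟩ := hb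
  refine Units.ext ?_
  ext i j
  fin_cases i <;> fin_cases j <;>
    · simp only [Units.val_mul]
      simp [Matrix.mul_apply, Fin.sum_univ_two, ha1, ha2, hb1, hb2]
      ring

/-- The subgroup `C_ns(p)^k` of `k`-th powers of elements of the nonsplit Cartan subgroup. -/
def CnsPow (p : ℕ) (ε : ZMod p) (k : ℕ) : Subgroup (GL2 p) where
  carrier := { g | ∃ x ∈ Cns p ε, x ^ k = g }
  one_mem' := ⟨1, (Cns p ε).one_mem, one_pow k⟩
  mul_mem' := by
    rintro a b ⟨x, hx, rfl⟩ ⟨y, hy, rfl⟩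
    exact ⟨x * y, (Cns p ε).mul_mem hx hy,
      Commute.mul_pow (cns_comm hx hy) k⟩
  inv_mem' := by
    rintro a ⟨x, hx, rfl⟩
    exact ⟨x⁻¹, (Cns p ε).inv_mem hx, by rw [inv_pow]⟩

/-- The conjugate subgroup `m H m⁻¹`. -/
def conjSub {p : ℕ} (m : GL2 p) (H : Subgroup (GL2 p)) : Subgroup (GL2 p) :=
  Subgroup.map (MulAut.conj m).toMonoidHom H

/-- Auxiliary: in `GL₂`, if the lower-left entry vanishes, the diagonal entries are nonzero. -/
lemma entry_ne_aux {p : ℕ} [Fact p.Prime] (g : GL2 p)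
    (h10 : (g : Matrix (Fin 2) (Fin 2) (ZMod p)) 1 0 = 0) :
    (g : Matrix (Fin 2) (Fin 2) (ZMod p)) 0 0 ≠ 0 ∧
    (g : Matrix (Fin 2) (Fin 2) (ZMod p)) 1 1 ≠ 0 := by
  have hdet : ((g : Matrix (Fin 2) (Fin 2) (ZMod p))).det ≠ 0 := by
    have h := g.val_inv
    have := congrArg Matrix.det h
    rw [Matrix.det_mul, Matrix.det_one] at this
    exact left_ne_zero_of_mul_eq_one this
  rw [Matrix.det_fin_two, h10] at hdet
  constructor <;> intro h <;> simp [h] at hdet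

/-- Auxiliary: a diagonal element killed by the `p`-th power map is trivial. -/
lemma cs_pow_p_aux {p : ℕ} [Fact p.Prime] {x : GL2 p} (hx : x ∈ Cs p) (hxp : x ^ p = 1) :
    x = 1 := by
  obtain ⟨h1, h2⟩ := hx
  have hd : (x : Matrix (Fin 2) (Fin 2) (ZMod p)) =
      Matrix.diagonal ![(x : Matrix (Fin 2) (Fin 2) (ZMod p)) 0 0,
        (x : Matrix (Fin 2) (Fin 2) (ZMod p)) 1 1] := by
    ext i j
    fin_cases i <;> fin_cases j <;> simp [Matrix.diagonal, h1, h2]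
  have hpow : ((x : Matrix (Fin 2) (Fin 2) (ZMod p))) ^ p = 1 := by
    rw [← Units.val_pow_eq_pow_val, hxp, Units.val_one]
  rw [hd, Matrix.diagonal_pow] at hpow
  have e0 : (x : Matrix (Fin 2) (Fin 2) (ZMod p)) 0 0 = 1 := by
    have := congrFun (congrFun hpow 0) 0
    simp [Matrix.diagonal, Matrix.one_apply] at this
    exact this
  have e1 : (x : Matrix (Fin 2) (Fin 2) (ZMod p)) 1 1 = 1 := by
    have := congrFun (congrFun hpow 1) 1
    simp [Matrix.diagonal, Matrix.one_apply] at this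
    exact this
  refine Units.ext ?_
  rw [hd, e0, e1]
  ext i j
  fin_cases i <;> fin_cases j <;> simp [Matrix.diagonal, Matrix.one_apply]

/-- Auxiliary: averaging gives a simultaneous fixed point of the affine action. -/
lemma avg_aux {p : ℕ} [Fact p.Prime] (G : Subgroup (GL2 p))
    (hG : ∀ g : G, ((g : GL2 p) : Matrix (Fin 2) (Fin 2) (ZMod p)) 1 0 = 0)
    (hN : ¬ p ∣ Nat.card G) :
    ∃ t : ZMod p, ∀ g : G,
      ((g : GL2 p) : Matrix (Fin 2) (Fin 2) (ZMod p)) 0 1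
        + t * (((g : GL2 p) : Matrix (Fin 2) (Fin 2) (ZMod p)) 1 1
          - ((g : GL2 p) : Matrix (Fin 2) (Fin 2) (ZMod p)) 0 0) = 0 := by
  haveI : Fintype G := Fintype.ofFinite G
  set e : G → Fin 2 → Fin 2 → ZMod p :=
    fun g i j => ((g : GL2 p) : Matrix (Fin 2) (Fin 2) (ZMod p)) i j with he
  have hNz : ((Nat.card G : ℕ) : ZMod p) ≠ 0 := by
    rw [Ne, ZMod.natCast_eq_zero_iff]; exact hN
  have hd : ∀ g : G, e g 1 1 ≠ 0 := fun g => (entry_ne_aux (g : GL2 p) (hG g)).2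
  set f : G → ZMod p := fun g => e g 0 1 * (e g 1 1)⁻¹ with hf
  set S : ZMod p := ∑ g : G, f g with hS
  have hmul01 : ∀ h g : G, e (h * g) 0 1 = e h 0 0 * e g 0 1 + e h 0 1 * e g 1 1 := by
    intro h g
    simp only [he, Subgroup.coe_mul, Units.val_mul, Matrix.mul_apply, Fin.sum_univ_two]
  have hmul11 : ∀ h g : G, e (h * g) 1 1 = e h 1 1 * e g 1 1 := by
    intro h g
    simp only [he, Subgroup.coe_mul, Units.val_mul, Matrix.mul_apply, Fin.sum_univ_two]
    rw [hG h]
    ring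
  have hfhg : ∀ h g : G, f (h * g) = (e h 0 0 * f g + e h 0 1) * (e h 1 1)⁻¹ := by
    intro h g
    rw [hf]
    simp only [hmul01, hmul11]
    field_simp [hd g, hd h]
  have hkey : ∀ h : G, S * e h 1 1 = e h 0 0 * S + (Nat.card G : ZMod p) * e h 0 1 := by
    intro h
    have h1 : S = ∑ g : G, f (h * g) :=
      (Fintype.sum_equiv (Equiv.mulLeft h) (fun g => f (h * g)) f (fun g => rfl)).symm
    have h2 : ∑ g : G, f (h * g)
        = (e h 0 0 * S + (Nat.card G : ZMod p) * e h 0 1) * (e h 1 1)⁻¹ := by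
      simp only [hfhg]
      rw [← Finset.sum_mul, Finset.sum_add_distrib, ← Finset.mul_sum, ← hS,
        Finset.sum_const, Finset.card_univ, nsmul_eq_mul, Nat.card_eq_fintype_card]
    nth_rewrite 1 [h1.trans h2]
    exact inv_mul_cancel_right₀ (hd h) _
  refine ⟨-((Nat.card G : ZMod p)⁻¹ * S), fun g => ?_⟩
  have hk := hkey g
  have hNN : ((Nat.card G : ℕ) : ZMod p)⁻¹ * ((Nat.card G : ℕ) : ZMod p) = 1 :=
    inv_mul_cancel₀ hNz
  show e g 0 1 + -(((Nat.card G : ℕ) : ZMod p)⁻¹ * S) * (e g 1 1 - e g 0 0) = 0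
  linear_combination -((Nat.card G : ℕ) : ZMod p)⁻¹ * hk - (e g 0 1) * hNN

theorem stmt5 (p : ℕ) [Fact p.Prime] (hp2 : p ≠ 2)
    (G : Subgroup (GL2 p)) (hG : G ≤ B0 p) :
    (∃ m : GL2 p, conjSub m G ≤ Cs p) ↔ ¬ (p ∣ Nat.card G) := by
  constructor
  · rintro ⟨m, hm⟩ hdvd
    haveI : Fintype G := Fintype.ofFinite G
    rw [Nat.card_eq_fintype_card] at hdvd
    obtain ⟨g, hg⟩ := exists_prime_orderOf_dvd_card p hdvd
    have h1 : g ^ p = 1 := orderOf_dvd_iff_pow_eq_one.mp (by rw [hg])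
    have h2 : (g : GL2 p) ^ p = 1 := by
      have := congrArg (fun y : G => (y : GL2 p)) h1
      simpa using this
    have hx : (MulAut.conj m) (g : GL2 p) ∈ Cs p := hm ⟨(g : GL2 p), g.2, rfl⟩
    have hxp : ((MulAut.conj m) (g : GL2 p)) ^ p = 1 := by
      rw [← map_pow, h2, _root_.map_one]
    have h3 := cs_pow_p_aux hx hxp
    have h4 : (g : GL2 p) = 1 := by
      have := (MulAut.conj m).injective (h3.trans (_root_.map_one (MulAut.conj m)).symm)
      exact this
    have h5 : g = 1 := Subtype.ext h4
    rw [h5, orderOf_one] at hg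
    exact (Fact.out : p.Prime).one_lt.ne hg
  · intro hN
    have hG' : ∀ g : G, ((g : GL2 p) : Matrix (Fin 2) (Fin 2) (ZMod p)) 1 0 = 0 :=
      fun g => hG g.2
    obtain ⟨t, ht⟩ := avg_aux G hG' hN
    have hvi : (!![1, t; 0, 1] : Matrix (Fin 2) (Fin 2) (ZMod p)) * !![1, -t; 0, 1] = 1 := by
      ext i j
      fin_cases i <;> fin_cases j <;>
        simp [Matrix.mul_apply, Fin.sum_univ_two, Matrix.one_apply]
    have hiv : (!![1, -t; 0, 1] : Matrix (Fin 2) (Fin 2) (ZMod p)) * !![1, t; 0, 1] = 1 := by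
      ext i j
      fin_cases i <;> fin_cases j <;>
        simp [Matrix.mul_apply, Fin.sum_univ_two, Matrix.one_apply]
    refine ⟨⟨!![1, t; 0, 1], !![1, -t; 0, 1], hvi, hiv⟩, ?_⟩
    set m : GL2 p := ⟨!![1, t; 0, 1], !![1, -t; 0, 1], hvi, hiv⟩ with hmdef
    have hmv : (m : Matrix (Fin 2) (Fin 2) (ZMod p)) = !![1, t; 0, 1] := rfl
    have hmi : ((m⁻¹ : GL2 p) : Matrix (Fin 2) (Fin 2) (ZMod p)) = !![1, -t; 0, 1] := rfl
    rintro x ⟨g, hg, rfl⟩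
    have hg10 : (g : Matrix (Fin 2) (Fin 2) (ZMod p)) 1 0 = 0 := hG hg
    have htg := ht ⟨g, hg⟩
    simp only at htg
    constructor
    · show ((m * g * m⁻¹ : GL2 p) : Matrix (Fin 2) (Fin 2) (ZMod p)) 0 1 = 0
      simp only [Units.val_mul, hmi, Matrix.mul_apply, Fin.sum_univ_two, hmv]
      simp only [Matrix.cons_val', Matrix.cons_val_zero, Matrix.cons_val_one,
        Matrix.head_cons, Matrix.head_fin_const, Matrix.empty_val',
        Matrix.cons_val_fin_one, Matrix.of_apply]
      rw [hg10]
      linear_combination htg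
    · show ((m * g * m⁻¹ : GL2 p) : Matrix (Fin 2) (Fin 2) (ZMod p)) 1 0 = 0
      simp only [Units.val_mul, hmi, Matrix.mul_apply, Fin.sum_univ_two, hmv]
      simp only [Matrix.cons_val', Matrix.cons_val_zero, Matrix.cons_val_one,
        Matrix.head_cons, Matrix.head_fin_const, Matrix.empty_val',
        Matrix.cons_val_fin_one, Matrix.of_apply]
      rw [hg10]
      ring
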